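/- arXiv:2406.13148 — 2 statements merged into one kernel-verified Lean document; each statement's English description precedes it below -/
import Mathlib

section
/- For any real-valued function c on ℝ and any λ ≥ 0, if s_i ≥ sup_{δ} (c(δ) - λ|δ - δ̂_i|) for each sample δ̂_i, i = 1,…,I, then for every probability measure Q on ℝ whose 1-Wasserstein distance to the empirical measure (1/I)∑_i Dirac(δ̂_i) is at most ε, the expectation E_Q[c] is at most λε + (1/I)∑_i s_i. -/
open MeasureTheory
open scoped ENNReal

/-- 1-Wasserstein distance defined via couplings (optimal transport with cost `edist`). -/
noncomputable def W1 {X : Type*} [MeasurableSpace X] [EMetricSpace X]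
    (P Q : Measure X) : ℝ≥0∞ :=
  ⨅ μ ∈ {μ : Measure (X × X) | μ.map Prod.fst = P ∧ μ.map Prod.snd = Q},
    ∫⁻ x, edist x.1 x.2 ∂μ

lemma integrable_dirac' {f : ℝ → ℝ} (hf : Measurable f) (a : ℝ) :
    Integrable f (Measure.dirac a) := by
  refine ⟨hf.aestronglyMeasurable, ?_⟩
  rw [HasFiniteIntegral, lintegral_dirac' _ (by fun_prop)]
  exact ENNReal.coe_lt_top

/-- weak duality of Wasserstein DRO: if `s i ≥ sup_δ (c δ - λ|δ - δ̂ i|)` for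
each sample, then for every probability measure `Q` within 1-Wasserstein distance `ε` of the
empirical measure, `E_Q[c] ≤ λ ε + (1/I) ∑ i, s i`. -/
theorem stmt1 {I : ℕ} (hI : 0 < I) (c : ℝ → ℝ) (hc : Measurable c)
    (lam ε : ℝ) (hlam : 0 ≤ lam) (hε : 0 ≤ ε)
    (δhat : Fin I → ℝ) (s : Fin I → ℝ)
    (hs : ∀ i : Fin I, ∀ δ : ℝ, c δ - lam * |δ - δhat i| ≤ s i)
    (Q : Measure ℝ) [IsProbabilityMeasure Q] (hcQ : Integrable c Q)
    (hW : W1 ((I : ℝ≥0∞)⁻¹ • ∑ i : Fin I, Measure.dirac (δhat i)) Q ≤ ENNReal.ofReal ε) :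
    ∫ δ, c δ ∂Q ≤ lam * ε + (1 / (I : ℝ)) * ∑ i : Fin I, s i := by
  have hIne : Nonempty (Fin I) := ⟨⟨0, hI⟩⟩
  -- the Lipschitz "dual" function
  set f : ℝ → ℝ :=
    fun x => Finset.univ.inf' Finset.univ_nonempty (fun i => s i + lam * |x - δhat i|) with hfdef
  have hfcont : Continuous f := by
    apply Continuous.finset_inf'_apply Finset.univ_nonempty
    intro i _
    exact continuous_const.add (continuous_const.mul ((continuous_id.sub continuous_const).abs))
  have hf1 : ∀ j, f (δhat j) ≤ s j := by
    intro j
    have := Finset.inf'_le (fun i => s i + lam * |δhat j - δhat i|)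
      (Finset.mem_univ j)
    simp only [sub_self, abs_zero, mul_zero, add_zero] at this
    exact this
  have hf2 : ∀ x y : ℝ, c y ≤ f x + lam * |y - x| := by
    intro x y
    have : c y - lam * |y - x| ≤ f x := by
      apply Finset.le_inf'
      intro i _
      have h1 := hs i y
      have htri : |y - δhat i| ≤ |y - x| + |x - δhat i| := abs_sub_le y x (δhat i)
      nlinarith [mul_le_mul_of_nonneg_left htri hlam]
    linarith
  -- set up for the ε/η argument
  have main : ∀ η : ℝ, 0 < η →
      ∫ δ, c δ ∂Q ≤ lam * ε + (1 / (I : ℝ)) * ∑ i : Fin I, s i + η := by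
    intro η hη
    set d : ℝ := η / (lam + 1) with hd
    have hd0 : 0 < d := div_pos hη (by linarith)
    -- extract a near-optimal coupling
    have hlt : W1 ((I : ℝ≥0∞)⁻¹ • ∑ i : Fin I, Measure.dirac (δhat i)) Q
        < ENNReal.ofReal ε + ENNReal.ofReal d := by
      refine lt_of_le_of_lt hW ?_
      have : (0 : ℝ≥0∞) < ENNReal.ofReal d := ENNReal.ofReal_pos.mpr hd0
      exact ENNReal.lt_add_right ENNReal.ofReal_ne_top this.ne'
    rw [W1, iInf_lt_iff] at hlt
    obtain ⟨μ, hlt⟩ := hlt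
    rw [iInf_lt_iff] at hlt
    obtain ⟨⟨hfst, hsnd⟩, hcost⟩ := hlt
    have hμprob : IsProbabilityMeasure μ := by
      constructor
      have : μ Set.univ = (μ.map Prod.snd) Set.univ := by
        rw [Measure.map_apply measurable_snd MeasurableSet.univ]; rfl
      rw [this, hsnd]; exact measure_univ
    -- cost in real terms
    have hedist : ∀ p : ℝ × ℝ, edist p.1 p.2 = ENNReal.ofReal |p.1 - p.2| := by
      intro p; rw [edist_dist, Real.dist_eq]
    have hcost' : ∫⁻ p, ENNReal.ofReal |p.1 - p.2| ∂μ ≤ ENNReal.ofReal (ε + d) := by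
      rw [ENNReal.ofReal_add hε hd0.le]
      refine le_of_lt ?_
      calc ∫⁻ p, ENNReal.ofReal |p.1 - p.2| ∂μ = ∫⁻ p, edist p.1 p.2 ∂μ := by
            simp_rw [hedist]
        _ < _ := hcost
    have habs_meas : Measurable fun p : ℝ × ℝ => |p.1 - p.2| :=
      (measurable_fst.sub measurable_snd).abs
    have habs_int : Integrable (fun p : ℝ × ℝ => |p.1 - p.2|) μ := by
      refine ⟨habs_meas.aestronglyMeasurable, ?_⟩
      rw [HasFiniteIntegral]
      have : ∀ p : ℝ × ℝ, (‖|p.1 - p.2|‖ₑ : ℝ≥0∞) = ENNReal.ofReal |p.1 - p.2| := by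
        intro p
        rw [← ofReal_norm, Real.norm_eq_abs, abs_abs]
      simp_rw [this]
      exact lt_of_le_of_lt hcost' ENNReal.ofReal_lt_top
    have habs_val : ∫ p, |p.1 - p.2| ∂μ ≤ ε + d := by
      have hnn : (0 : ℝ → ℝ × ℝ → ℝ) = 0 := rfl
      rw [integral_eq_lintegral_of_nonneg_ae
        (Filter.Eventually.of_forall fun p => abs_nonneg _) habs_meas.aestronglyMeasurable]
      exact ENNReal.toReal_le_of_le_ofReal (by linarith) hcost'
    -- integrability of the pieces
    have hc2_int : Integrable (fun p : ℝ × ℝ => c p.2) μ := by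
      show Integrable (c ∘ Prod.snd) μ
      rw [← integrable_map_measure hc.aestronglyMeasurable measurable_snd.aemeasurable, hsnd]
      exact hcQ
    have hf1_int : Integrable (fun p : ℝ × ℝ => f p.1) μ := by
      show Integrable (f ∘ Prod.fst) μ
      rw [← integrable_map_measure hfcont.measurable.aestronglyMeasurable
        measurable_fst.aemeasurable, hfst]
      refine Integrable.smul_measure ?_ (by simp [hI.ne'])
      refine integrable_finset_sum_measure.mpr fun i _ => ?_
      exact integrable_dirac' hfcont.measurable _
    -- pointwise bound and integrate
    have key : ∫ p, c p.2 ∂μ ≤ ∫ p, (f p.1 + lam * |p.1 - p.2|) ∂μ := by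
      refine integral_mono hc2_int (hf1_int.add (habs_int.const_mul lam)) ?_
      intro p
      simpa [abs_sub_comm] using hf2 p.1 p.2
    have hsplit : ∫ p, (f p.1 + lam * |p.1 - p.2|) ∂μ
        = ∫ p, f p.1 ∂μ + lam * ∫ p, |p.1 - p.2| ∂μ := by
      rw [integral_add hf1_int (habs_int.const_mul lam), integral_const_mul]
    -- value of ∫ f dP̂
    have hfP : ∫ p, f p.1 ∂μ ≤ (1 / (I : ℝ)) * ∑ i : Fin I, s i := by
      rw [integral_map measurable_fst.aemeasurable hfcont.measurable.aestronglyMeasurable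
        |>.symm.trans (by rw [hfst])]
      rw [integral_smul_measure, integral_finset_sum_measure
        (fun i _ => integrable_dirac' hfcont.measurable _)]
      simp only [integral_dirac]
      have h1 : ((I : ℝ≥0∞)⁻¹).toReal = 1 / (I : ℝ) := by
        simp [ENNReal.toReal_inv, one_div]
      rw [h1, smul_eq_mul]
      have hIpos : (0 : ℝ) < I := Nat.cast_pos.mpr hI
      apply mul_le_mul_of_nonneg_left _ (by positivity)
      exact Finset.sum_le_sum fun i _ => hf1 i
    -- value of ∫ c dQ
    have hcQ' : ∫ δ, c δ ∂Q = ∫ p, c p.2 ∂μ := by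
      rw [← hsnd, integral_map measurable_snd.aemeasurable hc.aestronglyMeasurable]
    have hlamd : lam * d ≤ η := by
      have hlp : (0 : ℝ) < lam + 1 := by linarith
      rw [hd]
      calc lam * (η / (lam + 1)) ≤ (lam + 1) * (η / (lam + 1)) := by
            have := div_nonneg hη.le hlp.le
            nlinarith
        _ = η := by field_simp
    calc ∫ δ, c δ ∂Q = ∫ p, c p.2 ∂μ := hcQ'
      _ ≤ ∫ p, f p.1 ∂μ + lam * ∫ p, |p.1 - p.2| ∂μ := by rw [← hsplit]; exact key
      _ ≤ (1 / (I : ℝ)) * ∑ i : Fin I, s i + lam * (ε + d) := by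
          have := mul_le_mul_of_nonneg_left habs_val hlam
          linarith
      _ ≤ lam * ε + (1 / (I : ℝ)) * ∑ i : Fin I, s i + η := by nlinarith
  -- conclude
  have := le_of_forall_pos_le_add (fun η hη => main η hη)
  linarith [this]
end

section
/- For fixed α ∈ [0,1], q_c ∈ ℝ, S > 0, the function g(p) = ((1-α)·p)² + q_c² - S² is convex and nondecreasing in p on [0, ∞), so its supremum over a Wasserstein ball of distributions supported on [0, p̄] is attained by shifting probability mass toward p̄; in particular, for any distribution Q on [0, p̄] with W₁(P̂, Q) ≤ ε where P̂ = (1/I)∑_i Dirac(p̂_i), and any λ ≥ 0, E_Q[g] ≤ λε + (1/I)∑_i max( g(p̄) - λ(p̄ - p̂_i), g(p̂_i) ). -/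
open MeasureTheory
open scoped ENNReal

lemma key_pointwise (g : ℝ → ℝ) (hconv : ConvexOn ℝ Set.univ g)
    (hmono : MonotoneOn g (Set.Ici 0))
    (lam pbar x y : ℝ) (hlam : 0 ≤ lam) (hx : x ∈ Set.Icc 0 pbar)
    (hy : y ∈ Set.Icc 0 pbar) :
    g y ≤ lam * |y - x| + max (g pbar - lam * (pbar - x)) (g x) := by
  obtain ⟨hx1, hx2⟩ := hx
  obtain ⟨hy1, hy2⟩ := hy
  rcases le_or_gt y x with h | h
  · have h1 : g y ≤ g x := hmono hy1 hx1 h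
    have h2 : 0 ≤ lam * |y - x| := by positivity
    have := le_max_right (g pbar - lam * (pbar - x)) (g x)
    linarith
  · have hxp : x < pbar := lt_of_lt_of_le h hy2
    have hd : 0 < pbar - x := by linarith
    set a : ℝ := (pbar - y) / (pbar - x) with ha
    set b : ℝ := (y - x) / (pbar - x) with hb
    have ha0 : 0 ≤ a := by apply div_nonneg <;> linarith
    have hb0 : 0 ≤ b := by apply div_nonneg <;> linarith
    have hab : a + b = 1 := by rw [ha, hb]; field_simp; ring
    have hcomb : a • x + b • pbar = y := by
      rw [smul_eq_mul, smul_eq_mul, ha, hb]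
      field_simp
      ring
    have hcvx := hconv.2 (Set.mem_univ x) (Set.mem_univ pbar) ha0 hb0 hab
    rw [hcomb] at hcvx
    simp only [smul_eq_mul] at hcvx
    have habs : |y - x| = b * (pbar - x) := by
      rw [abs_of_nonneg (by linarith), hb]
      field_simp
    have hm1 := le_max_left (g pbar - lam * (pbar - x)) (g x)
    have hm2 := le_max_right (g pbar - lam * (pbar - x)) (g x)
    set M := max (g pbar - lam * (pbar - x)) (g x) with hM
    have hMsum : a * M + b * M = M := by rw [← add_mul, hab, one_mul]
    have h1 : a * g x ≤ a * M := by nlinarith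
    have h2 : b * g pbar ≤ b * (M + lam * (pbar - x)) := by nlinarith
    have h2' : b * (M + lam * (pbar - x)) = b * M + lam * (b * (pbar - x)) := by ring
    rw [habs]
    linarith

/-- `g(p) = ((1-α)p)² + q_c² - S²` is convex and nondecreasing on `[0,∞)`;
consequently, for any distribution `Q` supported on `[0, p̄]` within 1-Wasserstein distance
`ε` of the empirical measure of samples `p̂_i ∈ [0, p̄]`, and any `λ ≥ 0`,
`E_Q[g] ≤ λε + (1/I)∑ᵢ max( g(p̄) - λ(p̄ - p̂ᵢ), g(p̂ᵢ) )`. -/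
theorem stmt7 {I : ℕ} (hI : 0 < I) (α qc S pbar ε lam : ℝ)
    (hα : α ∈ Set.Icc (0 : ℝ) 1) (hS : 0 < S) (hε : 0 ≤ ε) (hlam : 0 ≤ lam)
    (phat : Fin I → ℝ) (hphat : ∀ i, phat i ∈ Set.Icc 0 pbar)
    (g : ℝ → ℝ) (hg : g = fun p => ((1 - α) * p) ^ 2 + qc ^ 2 - S ^ 2) :
    ConvexOn ℝ Set.univ g ∧ MonotoneOn g (Set.Ici 0) ∧
    (∀ (Q : Measure ℝ), IsProbabilityMeasure Q → Q (Set.Icc 0 pbar)ᶜ = 0 →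
      Integrable g Q →
      W1 ((I : ℝ≥0∞)⁻¹ • ∑ i : Fin I, Measure.dirac (phat i)) Q ≤ ENNReal.ofReal ε →
      ∫ p, g p ∂Q ≤
        lam * ε + (1 / (I : ℝ)) * ∑ i : Fin I,
          max (g pbar - lam * (pbar - phat i)) (g (phat i))) := by
  have hconv : ConvexOn ℝ Set.univ g := by
    refine ⟨convex_univ, ?_⟩
    intro x _ y _ a b ha hb hab
    simp only [hg, smul_eq_mul]
    have hident : a * (((1 - α) * x) ^ 2 + qc ^ 2 - S ^ 2)
        + b * (((1 - α) * y) ^ 2 + qc ^ 2 - S ^ 2)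
        - (((1 - α) * (a * x + b * y)) ^ 2 + qc ^ 2 - S ^ 2)
        = a * b * ((1 - α) * (x - y)) ^ 2 := by
      have hb' : b = 1 - a := by linarith
      rw [hb']; ring
    nlinarith [hident, mul_nonneg (mul_nonneg ha hb) (sq_nonneg ((1 - α) * (x - y)))]
  have hmono : MonotoneOn g (Set.Ici 0) := by
    intro x hx y hy hxy
    simp only [hg]
    have hx0 : (0:ℝ) ≤ x := hx
    nlinarith [mul_nonneg (mul_nonneg (sq_nonneg (1 - α)) (sub_nonneg.2 hxy))
      (by linarith : (0:ℝ) ≤ x + y)]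
  have hgc : Continuous g := by rw [hg]; fun_prop
  refine ⟨hconv, hmono, ?_⟩
  intro Q hQprob hQsupp hQint hW
  have hpbar0 : 0 ≤ pbar := le_trans (hphat ⟨0, hI⟩).1 (hphat ⟨0, hI⟩).2
  set F : ℝ → ℝ := fun x => max (g pbar - lam * (pbar - x)) (g x) with hF
  have hFc : Continuous F := by
    apply Continuous.max
    · fun_prop
    · exact hgc
  set P : Measure ℝ := (I : ℝ≥0∞)⁻¹ • ∑ i : Fin I, Measure.dirac (phat i) with hP
  have hmIcc : MeasurableSet (Set.Icc (0:ℝ) pbar) := measurableSet_Icc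
  refine le_of_forall_pos_le_add fun η hη => ?_
  set δ' : ℝ := η / (lam + 1) with hδ'
  have hδ'pos : 0 < δ' := by positivity
  -- obtain a near-optimal coupling
  have hWlt : W1 P Q < ENNReal.ofReal ε + ENNReal.ofReal δ' :=
    lt_of_le_of_lt hW (ENNReal.lt_add_right ENNReal.ofReal_ne_top
      (ENNReal.ofReal_pos.2 hδ'pos).ne')
  rw [W1] at hWlt
  rw [iInf_lt_iff] at hWlt
  obtain ⟨μ, hWlt⟩ := hWlt
  rw [iInf_lt_iff] at hWlt
  obtain ⟨⟨hμ1, hμ2⟩, hcost⟩ := hWlt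
  have hμuniv : μ Set.univ = 1 := by
    have h1 : (μ.map Prod.snd) Set.univ = 1 := by rw [hμ2]; exact measure_univ
    rwa [Measure.map_apply measurable_snd MeasurableSet.univ, Set.preimage_univ] at h1
  have hμprob : IsProbabilityMeasure μ := ⟨hμuniv⟩
  -- a.e. membership
  have hay : ∀ᵐ z : ℝ × ℝ ∂μ, z.2 ∈ Set.Icc 0 pbar := by
    rw [ae_iff]
    have h1 : {z : ℝ × ℝ | ¬ z.2 ∈ Set.Icc 0 pbar} = Prod.snd ⁻¹' (Set.Icc 0 pbar)ᶜ := rfl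
    rw [h1, ← Measure.map_apply measurable_snd hmIcc.compl, hμ2, hQsupp]
  have hPcompl : P (Set.Icc 0 pbar)ᶜ = 0 := by
    rw [hP]
    have h0 : ∀ i : Fin I, Measure.dirac (phat i) (Set.Icc 0 pbar)ᶜ = 0 := by
      intro i
      rw [Measure.dirac_apply' _ hmIcc.compl]
      exact Set.indicator_of_notMem (by simp [hphat i]) _
    simp [Measure.smul_apply, h0]
  have hax : ∀ᵐ z : ℝ × ℝ ∂μ, z.1 ∈ Set.Icc 0 pbar := by
    rw [ae_iff]
    have h1 : {z : ℝ × ℝ | ¬ z.1 ∈ Set.Icc 0 pbar} = Prod.fst ⁻¹' (Set.Icc 0 pbar)ᶜ := rfl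
    rw [h1, ← Measure.map_apply measurable_fst hmIcc.compl, hμ1, hPcompl]
  -- cost function
  have hlint : ∫⁻ z : ℝ × ℝ, ENNReal.ofReal (|z.2 - z.1|) ∂μ
      = ∫⁻ z : ℝ × ℝ, edist z.1 z.2 ∂μ := by
    apply lintegral_congr
    intro z
    rw [edist_dist, Real.dist_eq, abs_sub_comm]
  have hcostfin : ∫⁻ z : ℝ × ℝ, edist z.1 z.2 ∂μ ≤ ENNReal.ofReal (ε + δ') := by
    rw [← ENNReal.ofReal_add hε hδ'pos.le] at hcost
    exact hcost.le
  have hcmeas : AEStronglyMeasurable (fun z : ℝ × ℝ => |z.2 - z.1|) μ :=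
    ((continuous_snd.sub continuous_fst).abs).aestronglyMeasurable
  have hcint : Integrable (fun z : ℝ × ℝ => |z.2 - z.1|) μ := by
    refine ⟨hcmeas, ?_⟩
    rw [hasFiniteIntegral_iff_ofReal (Filter.Eventually.of_forall fun z => abs_nonneg _),
      hlint]
    exact lt_of_le_of_lt hcostfin ENNReal.ofReal_lt_top
  have hcval : ∫ z : ℝ × ℝ, |z.2 - z.1| ∂μ ≤ ε + δ' := by
    rw [integral_eq_lintegral_of_nonneg_ae (Filter.Eventually.of_forall fun z => abs_nonneg _)
      hcmeas, hlint]
    calc (∫⁻ z : ℝ × ℝ, edist z.1 z.2 ∂μ).toReal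
        ≤ (ENNReal.ofReal (ε + δ')).toReal :=
          ENNReal.toReal_mono ENNReal.ofReal_ne_top hcostfin
      _ = ε + δ' := ENNReal.toReal_ofReal (by positivity)
  -- integrability of F pieces
  have hFdirac : ∀ i : Fin I, Integrable F (Measure.dirac (phat i)) := by
    intro i
    refine ⟨hFc.aestronglyMeasurable, ?_⟩
    rw [HasFiniteIntegral, lintegral_dirac' _ (hFc.measurable.enorm)]
    exact enorm_lt_top
  have hFP : Integrable F P := by
    rw [hP, integrable_smul_measure (ENNReal.inv_ne_zero.2 (ENNReal.natCast_ne_top I))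
      (ENNReal.inv_ne_top.2 (by exact_mod_cast hI.ne')),
      integrable_finset_sum_measure]
    exact fun i _ => hFdirac i
  have hFfst : Integrable (fun z : ℝ × ℝ => F z.1) μ := by
    have h1 := (integrable_map_measure hFc.aestronglyMeasurable
      measurable_fst.aemeasurable).1 (by rwa [hμ1])
    simpa [Function.comp_def] using h1
  have hgsnd : Integrable (fun z : ℝ × ℝ => g z.2) μ := by
    have h1 := (integrable_map_measure hgc.aestronglyMeasurable
      measurable_snd.aemeasurable).1 (by rwa [hμ2])
    simpa [Function.comp_def] using h1
  have hEq : ∫ p, g p ∂Q = ∫ z : ℝ × ℝ, g z.2 ∂μ := by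
    rw [← hμ2, integral_map measurable_snd.aemeasurable hgc.aestronglyMeasurable]
  have hbound : ∫ z : ℝ × ℝ, g z.2 ∂μ
      ≤ ∫ z : ℝ × ℝ, (lam * |z.2 - z.1| + F z.1) ∂μ := by
    refine integral_mono_ae hgsnd ((hcint.const_mul lam).add hFfst) ?_
    filter_upwards [hax, hay] with z hzx hzy
    exact key_pointwise g hconv hmono lam pbar z.1 z.2 hlam hzx hzy
  have hsplit : ∫ z : ℝ × ℝ, (lam * |z.2 - z.1| + F z.1) ∂μ
      = lam * ∫ z : ℝ × ℝ, |z.2 - z.1| ∂μ + ∫ z : ℝ × ℝ, F z.1 ∂μ := by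
    rw [integral_add (hcint.const_mul lam) hFfst, integral_const_mul]
  have hFint : ∫ z : ℝ × ℝ, F z.1 ∂μ = (1 / (I : ℝ)) * ∑ i : Fin I, F (phat i) := by
    have h1 : ∫ z : ℝ × ℝ, F z.1 ∂μ = ∫ x, F x ∂(μ.map Prod.fst) :=
      (integral_map measurable_fst.aemeasurable hFc.aestronglyMeasurable).symm
    rw [h1, hμ1, hP, integral_smul_measure,
      integral_finset_sum_measure (fun i _ => hFdirac i)]
    simp only [integral_dirac]
    rw [ENNReal.toReal_inv, smul_eq_mul, one_div]
    simp
  have hlamδ : lam * δ' ≤ η := by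
    rw [hδ', mul_comm, div_mul_eq_mul_div, div_le_iff₀ (by positivity)]
    nlinarith
  have hcostR : lam * ∫ z : ℝ × ℝ, |z.2 - z.1| ∂μ ≤ lam * (ε + δ') :=
    mul_le_mul_of_nonneg_left hcval hlam
  have hsum : (1 / (I : ℝ)) * ∑ i : Fin I, F (phat i)
      = (1 / (I : ℝ)) * ∑ i : Fin I, max (g pbar - lam * (pbar - phat i)) (g (phat i)) := rfl
  rw [hEq]
  calc ∫ z : ℝ × ℝ, g z.2 ∂μ
      ≤ lam * ∫ z : ℝ × ℝ, |z.2 - z.1| ∂μ + ∫ z : ℝ × ℝ, F z.1 ∂μ := by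
        rw [← hsplit]; exact hbound
    _ ≤ lam * (ε + δ') + (1 / (I : ℝ)) * ∑ i : Fin I, F (phat i) := by
        rw [hFint]; linarith
    _ ≤ lam * ε + (1 / (I : ℝ)) * ∑ i : Fin I,
          max (g pbar - lam * (pbar - phat i)) (g (phat i)) + η := by
        rw [← hsum]; nlinarith
end
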